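/- arXiv:1906.10933 — 2 statements merged into one kernel-verified Lean document; each statement's English description precedes it below -/
import Mathlib

section
/- Let S : X → E be an admissible impact map and A ⊂ E an admissible acceptance set. Assume S is positively homogeneous (S(λX) = λS(X) for all λ > 0 and X ∈ X) and A is a cone. Then α = −δ_D, i.e. α(Z) = 0 for Z ∈ D and α(Z) = −∞ otherwise, where D := {Z ∈ X'_+ : there exists W ∈ bar(A) such that E[⟨X,Z⟩] ≥ E[S(X)W] for all X ∈ X}. -/
open MeasureTheory Filter Set
open scoped ENNReal

noncomputable section

namespace SystemicRisk

variable {Ω : Type*} [MeasurableSpace Ω]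

/-- A random variable is essentially bounded. -/
def EssBdd {μ : Measure Ω} (f : Ω →ₘ[μ] ℝ) : Prop :=
  ∃ C : ℝ, ∀ᵐ ω ∂μ, |f ω| ≤ C

/-- The scalar pairing `E[U W]`. -/
def ip {μ : Measure Ω} (U W : Ω →ₘ[μ] ℝ) : ℝ := ∫ ω, U ω * W ω ∂μ

/-- The Köthe dual of a set of random variables. -/
def kdual {μ : Measure Ω} (L : Set (Ω →ₘ[μ] ℝ)) : Set (Ω →ₘ[μ] ℝ) :=
  {Z | ∀ f ∈ L, Integrable (fun ω => f ω * Z ω) μ}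

/-- `nrm` is a Banach lattice norm on `L` (w.r.t. the a.s. order). -/
structure IsBLNorm {μ : Measure Ω} (L : Set (Ω →ₘ[μ] ℝ)) (nrm : (Ω →ₘ[μ] ℝ) → ℝ) : Prop where
  nonneg : ∀ f ∈ L, 0 ≤ nrm f
  eq_zero_iff : ∀ f ∈ L, (nrm f = 0 ↔ f = 0)
  smul_eq : ∀ f ∈ L, ∀ c : ℝ, nrm (c • f) = |c| * nrm f
  triangle : ∀ f ∈ L, ∀ g ∈ L, nrm (f + g) ≤ nrm f + nrm g
  solid : ∀ f ∈ L, ∀ g ∈ L, |f| ≤ |g| → nrm f ≤ nrm g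
  complete : ∀ u : ℕ → (Ω →ₘ[μ] ℝ), (∀ n, u n ∈ L) →
      (∀ ε : ℝ, 0 < ε → ∃ N : ℕ, ∀ m ≥ N, ∀ n ≥ N, nrm (u m - u n) < ε) →
      ∃ f ∈ L, ∀ ε : ℝ, 0 < ε → ∃ N : ℕ, ∀ n ≥ N, nrm (u n - f) < ε

/-- `L` is an admissible space: a linear subspace of `L^0` which is a Banach lattice
(for the a.s. order, with norm `nrm`) satisfying `L^∞ ⊆ L ⊆ L^1`. -/
structure IsAdmissible {μ : Measure Ω} (L : Set (Ω →ₘ[μ] ℝ)) (nrm : (Ω →ₘ[μ] ℝ) → ℝ) : Prop where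
  zero_mem : (0 : Ω →ₘ[μ] ℝ) ∈ L
  add_mem : ∀ f ∈ L, ∀ g ∈ L, f + g ∈ L
  smul_mem : ∀ (c : ℝ), ∀ f ∈ L, c • f ∈ L
  sup_mem : ∀ f ∈ L, ∀ g ∈ L, f ⊔ g ∈ L
  inf_mem : ∀ f ∈ L, ∀ g ∈ L, f ⊓ g ∈ L
  linfty_subset : ∀ f, EssBdd f → f ∈ L
  subset_lone : ∀ f ∈ L, Integrable f μ
  banach : IsBLNorm L nrm

variable {d : ℕ}

/-- The product space `X = X_1 × ⋯ × X_d`. -/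
def prodSet {μ : Measure Ω} (Li : Fin d → Set (Ω →ₘ[μ] ℝ)) : Set (Fin d → (Ω →ₘ[μ] ℝ)) :=
  {X | ∀ i, X i ∈ Li i}

/-- The vector pairing `E[⟨X,Z⟩] = ∑ i, E[X_i Z_i]`. -/
def pairing {μ : Measure Ω} (X Z : Fin d → (Ω →ₘ[μ] ℝ)) : ℝ := ∑ i, ip (X i) (Z i)

/-- The constant random vector associated with `m ∈ ℝ^d`. -/
def cvec (μ : Measure Ω) (m : Fin d → ℝ) : Fin d → (Ω →ₘ[μ] ℝ) :=
  fun i => (AEEqFun.const Ω (m i) : Ω →ₘ[μ] ℝ)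

/-- The weak topology `σ(P, D)` on a set of random vectors `P` induced by the pairing
with elements of `D`. -/
def wtop {μ : Measure Ω} (P D : Set (Fin d → (Ω →ₘ[μ] ℝ))) : TopologicalSpace ↥P :=
  TopologicalSpace.induced
    (fun X : ↥P => fun Z : ↥D => pairing (X : Fin d → (Ω →ₘ[μ] ℝ)) (Z : Fin d → (Ω →ₘ[μ] ℝ)))
    Pi.topologicalSpace

/-- The weak topology `σ(P, D)` on a set of random variables `P` induced by the pairing
with elements of `D`. -/
def wtop1 {μ : Measure Ω} (P D : Set (Ω →ₘ[μ] ℝ)) : TopologicalSpace ↥P :=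
  TopologicalSpace.induced
    (fun U : ↥P => fun W : ↥D => ip (U : Ω →ₘ[μ] ℝ) (W : Ω →ₘ[μ] ℝ))
    Pi.topologicalSpace

/-- An admissible impact map `S : X → E`. -/
structure IsAdmissibleImpact {μ : Measure Ω} (XX XX' : Set (Fin d → (Ω →ₘ[μ] ℝ)))
    (EE EE' : Set (Ω →ₘ[μ] ℝ)) (S : (Fin d → (Ω →ₘ[μ] ℝ)) → (Ω →ₘ[μ] ℝ)) : Prop where
  mapsTo : ∀ X ∈ XX, S X ∈ EE
  nonconst : ∃ X ∈ XX, ∃ Y ∈ XX, S X ≠ S Y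
  normalized : S 0 = 0
  mono : ∀ X ∈ XX, ∀ Y ∈ XX, X ≤ Y → S X ≤ S Y
  concave : ∀ X ∈ XX, ∀ Y ∈ XX, ∀ t : ℝ, 0 ≤ t → t ≤ 1 →
      t • S X + (1 - t) • S Y ≤ S (t • X + (1 - t) • Y)
  usc : ∀ W ∈ EE', (0 : Ω →ₘ[μ] ℝ) ≤ W →
      @UpperSemicontinuous (↥XX) ℝ (wtop XX XX') _
        (fun X : ↥XX => ∫ ω, S (X : Fin d → (Ω →ₘ[μ] ℝ)) ω * W ω ∂μ)

/-- An admissible acceptance set `A ⊆ E` (relative to the impact map `S`). -/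
structure IsAdmissibleAcceptance {μ : Measure Ω} (XX : Set (Fin d → (Ω →ₘ[μ] ℝ)))
    (EE EE' : Set (Ω →ₘ[μ] ℝ)) (S : (Fin d → (Ω →ₘ[μ] ℝ)) → (Ω →ₘ[μ] ℝ))
    (A : Set (Ω →ₘ[μ] ℝ)) : Prop where
  subset : A ⊆ EE
  preimage_nonempty : ∃ X ∈ XX, S X ∈ A
  preimage_proper : ∃ X ∈ XX, S X ∉ A
  zero_mem : (0 : Ω →ₘ[μ] ℝ) ∈ A
  mono : ∀ U ∈ A, ∀ V ∈ EE, (0 : Ω →ₘ[μ] ℝ) ≤ V → U + V ∈ A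
  convex : ∀ U ∈ A, ∀ V ∈ A, ∀ t : ℝ, 0 ≤ t → t ≤ 1 → t • U + (1 - t) • V ∈ A
  closed : @IsClosed (↥EE) (wtop1 EE EE') {U : ↥EE | (U : Ω →ₘ[μ] ℝ) ∈ A}

/-- The systemic acceptance set `S⁻¹(A) = {X ∈ X : S(X) ∈ A}`. -/
def sysAcc {μ : Measure Ω} (XX : Set (Fin d → (Ω →ₘ[μ] ℝ)))
    (S : (Fin d → (Ω →ₘ[μ] ℝ)) → (Ω →ₘ[μ] ℝ)) (A : Set (Ω →ₘ[μ] ℝ)) :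
    Set (Fin d → (Ω →ₘ[μ] ℝ)) :=
  {X ∈ XX | S X ∈ A}

/-- The "first allocate, then aggregate" systemic risk measure `ρ`. -/
def rho (μ : Measure Ω) (S : (Fin d → (Ω →ₘ[μ] ℝ)) → (Ω →ₘ[μ] ℝ)) (A : Set (Ω →ₘ[μ] ℝ))
    (X : Fin d → (Ω →ₘ[μ] ℝ)) : EReal :=
  ⨅ m ∈ {m : Fin d → ℝ | S (X + cvec μ m) ∈ A}, ((∑ i, m i : ℝ) : EReal)

/-- The (lower) support function of a set of random vectors. -/
def suppV {μ : Measure Ω} (B : Set (Fin d → (Ω →ₘ[μ] ℝ))) (Z : Fin d → (Ω →ₘ[μ] ℝ)) : EReal :=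
  ⨅ X ∈ B, ((pairing X Z : ℝ) : EReal)

/-- The barrier cone of a set of random vectors, inside the dual set `D`. -/
def barrV {μ : Measure Ω} (B D : Set (Fin d → (Ω →ₘ[μ] ℝ))) : Set (Fin d → (Ω →ₘ[μ] ℝ)) :=
  {Z ∈ D | ⊥ < suppV B Z}

/-- The (lower) support function of a set of random variables. -/
def suppS {μ : Measure Ω} (A : Set (Ω →ₘ[μ] ℝ)) (W : Ω →ₘ[μ] ℝ) : EReal :=
  ⨅ U ∈ A, ((ip U W : ℝ) : EReal)

/-- The barrier cone of a set of random variables, inside the dual set `D`. -/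
def barrS {μ : Measure Ω} (A D : Set (Ω →ₘ[μ] ℝ)) : Set (Ω →ₘ[μ] ℝ) :=
  {W ∈ D | ⊥ < suppS A W}

/-- The generic penalty function with dual variables `W` ranging over `K`. -/
def penalty {μ : Measure Ω} (XX : Set (Fin d → (Ω →ₘ[μ] ℝ)))
    (A : Set (Ω →ₘ[μ] ℝ)) (S : (Fin d → (Ω →ₘ[μ] ℝ)) → (Ω →ₘ[μ] ℝ))
    (K : Set (Ω →ₘ[μ] ℝ)) (Z : Fin d → (Ω →ₘ[μ] ℝ)) : EReal :=
  ⨆ W ∈ K, (suppS A W +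
    ⨅ X ∈ XX, ((pairing X Z - ∫ ω, S X ω * W ω ∂μ : ℝ) : EReal))

/-- a.s. strictly positive random variables. -/
def strictPos (μ : Measure Ω) : Set (Ω →ₘ[μ] ℝ) := {W | ∀ᵐ ω ∂μ, 0 < W ω}

/-- The penalty function `α`. -/
def alpha {μ : Measure Ω} (XX : Set (Fin d → (Ω →ₘ[μ] ℝ))) (EE' : Set (Ω →ₘ[μ] ℝ))
    (A : Set (Ω →ₘ[μ] ℝ)) (S : (Fin d → (Ω →ₘ[μ] ℝ)) → (Ω →ₘ[μ] ℝ)) :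
    (Fin d → (Ω →ₘ[μ] ℝ)) → EReal :=
  penalty XX A S (barrS A EE')

/-- The penalty function `α⁺`. -/
def alphaPlus {μ : Measure Ω} (XX : Set (Fin d → (Ω →ₘ[μ] ℝ))) (EE' : Set (Ω →ₘ[μ] ℝ))
    (A : Set (Ω →ₘ[μ] ℝ)) (S : (Fin d → (Ω →ₘ[μ] ℝ)) → (Ω →ₘ[μ] ℝ)) :
    (Fin d → (Ω →ₘ[μ] ℝ)) → EReal :=
  penalty XX A S (barrS A EE' ∩ (strictPos μ ∪ {0}))

/-- a.s. strictly positive random vectors. -/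
def strictPosV (μ : Measure Ω) (d : ℕ) : Set (Fin d → (Ω →ₘ[μ] ℝ)) :=
  {Z | ∀ i, ∀ᵐ ω ∂μ, 0 < Z i ω}

/-- The set `C` of nonnegative dual vectors with all components of expectation one. -/
def Cset {μ : Measure Ω} (XX' : Set (Fin d → (Ω →ₘ[μ] ℝ))) : Set (Fin d → (Ω →ₘ[μ] ℝ)) :=
  {Z ∈ XX' | (∀ i, (0 : Ω →ₘ[μ] ℝ) ≤ Z i) ∧ ∀ i, (∫ ω, Z i ω ∂μ) = 1}

/-- A map with values in `[−∞,∞]` is proper on `P` if it never attains `−∞` on `P`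
and is finite somewhere on `P`. -/
def ProperOn {β : Type*} (P : Set β) (f : β → EReal) : Prop :=
  (∀ x ∈ P, f x ≠ ⊥) ∧ ∃ x ∈ P, f x ≠ ⊤

/-- The positive part of an extended real number, as an extended nonnegative real. -/
def epos (x : EReal) : ℝ≥0∞ := if x = ⊤ then ⊤ else ENNReal.ofReal x.toReal

/-- The integral of an extended-real-valued function. -/
def eintegral (μ : Measure Ω) (g : Ω → EReal) : EReal :=
  ((∫⁻ ω, epos (g ω) ∂μ : ℝ≥0∞) : EReal) - ((∫⁻ ω, epos (-(g ω)) ∂μ : ℝ≥0∞) : EReal)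


-- aux scaling lemma
lemma scale_bot {J : EReal} {a : ℝ} (ha : a < 0)
    (h : ∀ c : ℝ, 0 < c → J ≤ ((c * a : ℝ) : EReal)) : J = ⊥ := by
  induction J using EReal.rec with
  | bot => rfl
  | coe r =>
      have h1 : (r : EReal) ≤ ((1 * a : ℝ) : EReal) := h 1 one_pos
      have hr : r ≤ a := by rwa [one_mul, EReal.coe_le_coe_iff] at h1
      have hc : 0 < (r - 1) / a := div_pos_of_neg_of_neg (by linarith) ha
      have h2 := h _ hc
      rw [div_mul_cancel₀ _ ha.ne, EReal.coe_le_coe_iff] at h2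
      linarith
  | top =>
      have h1 : (⊤ : EReal) ≤ ((1 * a : ℝ) : EReal) := h 1 one_pos
      exact absurd (lt_of_le_of_lt h1 (EReal.coe_lt_top _)) (lt_irrefl _)

lemma ip_zero_left {μ : Measure Ω} (W : Ω →ₘ[μ] ℝ) : ip 0 W = 0 := by
  unfold ip
  rw [integral_congr_ae (g := fun _ => (0:ℝ))]
  · exact integral_zero _ _
  · filter_upwards [AEEqFun.coeFn_zero (β := ℝ) (μ := μ)] with ω h
    simp [h]

lemma ip_smul_left {μ : Measure Ω} (c : ℝ) (f W : Ω →ₘ[μ] ℝ) :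
    ip (c • f) W = c * ip f W := by
  unfold ip
  rw [← integral_const_mul]
  refine integral_congr_ae ?_
  filter_upwards [AEEqFun.coeFn_smul c f] with ω h
  simp [h, mul_assoc]

lemma one_mem_bdd {μ : Measure Ω} : EssBdd (AEEqFun.const Ω (1:ℝ) : Ω →ₘ[μ] ℝ) := by
  refine ⟨1, ?_⟩
  filter_upwards [AEEqFun.coeFn_const (β := ℝ) Ω 1] with ω h
  simp [h, Function.const]

lemma kdual_integrable {μ : Measure Ω} {L : Set (Ω →ₘ[μ] ℝ)}
    (h1 : (AEEqFun.const Ω (1:ℝ) : Ω →ₘ[μ] ℝ) ∈ L) {W : Ω →ₘ[μ] ℝ} (hW : W ∈ kdual L) :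
    Integrable (fun ω => W ω) μ := by
  have := hW _ h1
  refine this.congr ?_
  filter_upwards [AEEqFun.coeFn_const (β := ℝ) Ω 1] with ω h
  simp [h, Function.const]

/-- Test function against a non-a.e.-nonnegative integrable `F`. -/
lemma exists_neg_test {μ : Measure Ω} (F : Ω →ₘ[μ] ℝ)
    (hFi : Integrable (fun ω => F ω) μ) (h : ¬ (0 : Ω →ₘ[μ] ℝ) ≤ F) :
    ∃ V : Ω →ₘ[μ] ℝ, EssBdd V ∧ (0 : Ω →ₘ[μ] ℝ) ≤ V ∧ ip V F < 0 := by
  set s : Set Ω := {ω | F ω < 0} with hs_def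
  have hs : MeasurableSet s := measurableSet_lt F.measurable measurable_const
  set f₀ : Ω → ℝ := s.indicator (fun _ => (1:ℝ)) with hf₀_def
  have hf₀m : Measurable f₀ := Measurable.indicator measurable_const hs
  set V : Ω →ₘ[μ] ℝ := AEEqFun.mk f₀ hf₀m.aestronglyMeasurable with hV_def
  have hco : ⇑V =ᵐ[μ] f₀ := AEEqFun.coeFn_mk _ _
  have hf₀01 : ∀ ω, f₀ ω = 0 ∨ f₀ ω = 1 := by
    intro ω
    by_cases hω : ω ∈ s <;> simp [hf₀_def, Set.indicator, hω]
  refine ⟨V, ⟨1, ?_⟩, ?_, ?_⟩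
  · filter_upwards [hco] with ω hω
    rcases hf₀01 ω with h' | h' <;> simp [hω, h']
  · rw [← AEEqFun.coeFn_le]
    filter_upwards [hco, AEEqFun.coeFn_zero (β := ℝ) (μ := μ)] with ω hω h0
    rcases hf₀01 ω with h' | h' <;> simp [hω, h0, h']
  · -- ip V F = ∫ min (F ω) 0 < 0
    have hkey : ∀ ω, f₀ ω * F ω = min (F ω) 0 := by
      intro ω
      by_cases hω : F ω < 0
      · have : ω ∈ s := hω
        simp [hf₀_def, Set.indicator, this, min_eq_left hω.le]
      · have : ω ∉ s := hω
        push_neg at hω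
        simp [hf₀_def, Set.indicator, this, min_eq_right hω]
    have hipeq : ip V F = ∫ ω, min (F ω) 0 ∂μ := by
      unfold ip
      refine integral_congr_ae ?_
      filter_upwards [hco] with ω hω
      rw [hω, hkey]
    have hgint : Integrable (fun ω => min (F ω) 0) μ := by
      refine hFi.mono ((F.measurable.min measurable_const).aestronglyMeasurable) ?_
      refine Eventually.of_forall fun ω => ?_
      rw [Real.norm_eq_abs, Real.norm_eq_abs, abs_le]
      constructor
      · rcases le_or_gt 0 (F ω) with h' | h'
        · rw [min_eq_right h']; exact neg_nonpos_of_nonneg (abs_nonneg _)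
        · rw [min_eq_left h'.le]; exact neg_abs_le _
      · rcases le_or_gt 0 (F ω) with h' | h'
        · rw [min_eq_right h']; exact abs_nonneg _
        · rw [min_eq_left h'.le]; exact le_abs_self _
    have hle : ∫ ω, min (F ω) 0 ∂μ ≤ 0 :=
      integral_nonpos_of_ae (Eventually.of_forall fun ω => min_le_right _ _)
    rcases lt_or_eq_of_le hle with hlt | heq
    · rw [hipeq]; exact hlt
    · exfalso
      have hnegint : Integrable (fun ω => -(min (F ω) 0)) μ := hgint.neg
      have : (∫ ω, -(min (F ω) 0) ∂μ) = 0 := by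
        rw [integral_neg, heq, neg_zero]
      have hae := (integral_eq_zero_iff_of_nonneg
        (fun ω => neg_nonneg.mpr (min_le_right _ _)) hnegint).mp this
      apply h
      rw [← AEEqFun.coeFn_le]
      filter_upwards [hae, AEEqFun.coeFn_zero (β := ℝ) (μ := μ)] with ω hω h0
      simp only [Pi.zero_apply, neg_eq_zero] at hω
      rw [h0]
      by_contra hneg
      push_neg at hneg
      simp only [Pi.zero_apply] at hneg
      rw [min_eq_left hneg.le] at hω
      exact absurd hω hneg.ne

lemma pairing_zero_left {μ : Measure Ω} {d : ℕ} (Z : Fin d → (Ω →ₘ[μ] ℝ)) :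
    pairing 0 Z = 0 := by
  unfold pairing
  refine Finset.sum_eq_zero fun i _ => ?_
  exact ip_zero_left (Z i)

lemma pairing_smul_left {μ : Measure Ω} {d : ℕ} (c : ℝ) (X Z : Fin d → (Ω →ₘ[μ] ℝ)) :
    pairing (c • X) Z = c * pairing X Z := by
  unfold pairing
  rw [Finset.mul_sum]
  refine Finset.sum_congr rfl fun i _ => ?_
  exact ip_smul_left c (X i) (Z i)

lemma zero_mem_prodSet {μ : Measure Ω} {d : ℕ} {Li : Fin d → Set (Ω →ₘ[μ] ℝ)}
    {nrmX : Fin d → ((Ω →ₘ[μ] ℝ) → ℝ)} (hLi : ∀ i, IsAdmissible (Li i) (nrmX i)) :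
    (0 : Fin d → (Ω →ₘ[μ] ℝ)) ∈ prodSet Li :=
  fun i => (hLi i).zero_mem

lemma smul_mem_prodSet {μ : Measure Ω} {d : ℕ} {Li : Fin d → Set (Ω →ₘ[μ] ℝ)}
    {nrmX : Fin d → ((Ω →ₘ[μ] ℝ) → ℝ)} (hLi : ∀ i, IsAdmissible (Li i) (nrmX i))
    (c : ℝ) {X : Fin d → (Ω →ₘ[μ] ℝ)} (hX : X ∈ prodSet Li) :
    c • X ∈ prodSet Li :=
  fun i => (hLi i).smul_mem c (X i) (hX i)

/-- Support function of a cone containing `0` is `0` wherever it is not `⊥`. -/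
lemma suppS_conic {μ : Measure Ω} {A : Set (Ω →ₘ[μ] ℝ)} (h0 : (0 : Ω →ₘ[μ] ℝ) ∈ A)
    (hcone : ∀ c : ℝ, 0 < c → ∀ U ∈ A, c • U ∈ A) {W : Ω →ₘ[μ] ℝ}
    (hbar : ⊥ < suppS A W) : suppS A W = 0 := by
  have hle : suppS A W ≤ 0 := by
    have := iInf₂_le (f := fun U (_ : U ∈ A) => ((ip U W : ℝ) : EReal)) 0 h0
    rwa [ip_zero_left, EReal.coe_zero] at this
  have hge : (0 : EReal) ≤ suppS A W := by
    refine le_iInf₂ fun U hU => ?_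
    by_contra hneg
    push_neg at hneg
    have hipn : ip U W < 0 := by
      rwa [← EReal.coe_zero, EReal.coe_lt_coe_iff] at hneg
    have hsb : suppS A W = ⊥ := by
      refine scale_bot hipn fun c hc => ?_
      have hm := iInf₂_le (f := fun U (_ : U ∈ A) => ((ip U W : ℝ) : EReal))
        (c • U) (hcone c hc U hU)
      rwa [ip_smul_left] at hm
    rw [hsb] at hbar
    exact lt_irrefl _ hbar
  exact le_antisymm hle hge

/-- Elements of the barrier cone are nonnegative. -/
lemma barrS_nonneg {μ : Measure Ω} {EE : Set (Ω →ₘ[μ] ℝ)} {nrmE : (Ω →ₘ[μ] ℝ) → ℝ}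
    {A : Set (Ω →ₘ[μ] ℝ)} (hE : IsAdmissible EE nrmE) (h0 : (0 : Ω →ₘ[μ] ℝ) ∈ A)
    (hmono : ∀ U ∈ A, ∀ V ∈ EE, (0 : Ω →ₘ[μ] ℝ) ≤ V → U + V ∈ A)
    {W : Ω →ₘ[μ] ℝ} (hW : W ∈ barrS A (kdual EE)) : (0 : Ω →ₘ[μ] ℝ) ≤ W := by
  by_contra h
  have h1mem : (AEEqFun.const Ω (1:ℝ) : Ω →ₘ[μ] ℝ) ∈ EE := hE.linfty_subset _ one_mem_bdd
  have hWint : Integrable (fun ω => W ω) μ := kdual_integrable h1mem hW.1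
  obtain ⟨V, hVb, hVpos, hVneg⟩ := exists_neg_test W hWint h
  have hVE : V ∈ EE := hE.linfty_subset V hVb
  have hmem : ∀ c : ℝ, 0 < c → c • V ∈ A := by
    intro c hc
    have hcV : (0 : Ω →ₘ[μ] ℝ) ≤ c • V := by
      rw [← AEEqFun.coeFn_le]
      have hV0 : (0 : Ω → ℝ) ≤ᵐ[μ] ⇑V := by
        have := AEEqFun.coeFn_le.mpr hVpos
        filter_upwards [this, AEEqFun.coeFn_zero (β := ℝ) (μ := μ)] with ω h1 h2
        rw [← h2]; exact h1
      filter_upwards [AEEqFun.coeFn_smul c V, hV0,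
        AEEqFun.coeFn_zero (β := ℝ) (μ := μ)] with ω h1 h2 h3
      rw [h1, h3]
      exact mul_nonneg hc.le h2
    have := hmono 0 h0 (c • V) (hE.smul_mem c V hVE) hcV
    rwa [zero_add] at this
  have hsb : suppS A W = ⊥ := by
    refine scale_bot hVneg fun c hc => ?_
    have hm := iInf₂_le (f := fun U (_ : U ∈ A) => ((ip U W : ℝ) : EReal))
      (c • V) (hmem c hc)
    rwa [ip_smul_left] at hm
  have hb := hW.2
  rw [hsb] at hb
  exact lt_irrefl _ hb


open scoped Classical in
lemma conic_inf {μ : Measure Ω} {d : ℕ} {Li : Fin d → Set (Ω →ₘ[μ] ℝ)}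
    {nrmX : Fin d → ((Ω →ₘ[μ] ℝ) → ℝ)} (hLi : ∀ i, IsAdmissible (Li i) (nrmX i))
    {S : (Fin d → (Ω →ₘ[μ] ℝ)) → (Ω →ₘ[μ] ℝ)} (hS0 : S 0 = 0)
    (hph : ∀ c : ℝ, 0 < c → ∀ X ∈ prodSet Li, S (c • X) = c • S X)
    (Z : Fin d → (Ω →ₘ[μ] ℝ)) (W : Ω →ₘ[μ] ℝ) :
    (⨅ X ∈ prodSet Li, ((pairing X Z - ∫ ω, S X ω * W ω ∂μ : ℝ) : EReal)) =
      if ∀ X ∈ prodSet Li, (∫ ω, S X ω * W ω ∂μ) ≤ pairing X Z then 0 else ⊥ := by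
  have hval : ∀ X : Fin d → (Ω →ₘ[μ] ℝ),
      (∫ ω, S X ω * W ω ∂μ) = ip (S X) W := fun X => rfl
  have h0mem : (0 : Fin d → (Ω →ₘ[μ] ℝ)) ∈ prodSet Li := zero_mem_prodSet hLi
  have hle : (⨅ X ∈ prodSet Li, ((pairing X Z - ∫ ω, S X ω * W ω ∂μ : ℝ) : EReal)) ≤ 0 := by
    have := iInf₂_le
      (f := fun X (_ : X ∈ prodSet Li) => ((pairing X Z - ∫ ω, S X ω * W ω ∂μ : ℝ) : EReal))
      0 h0mem
    rw [pairing_zero_left, hval, hS0, ip_zero_left, sub_zero, EReal.coe_zero] at this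
    exact this
  split_ifs with hc
  · refine le_antisymm hle (le_iInf₂ fun X hX => ?_)
    rw [← EReal.coe_zero, EReal.coe_le_coe_iff]
    exact sub_nonneg.mpr (hc X hX)
  · push_neg at hc
    obtain ⟨X₀, hX₀, hX₀neg⟩ := hc
    refine scale_bot (a := pairing X₀ Z - ∫ ω, S X₀ ω * W ω ∂μ) (by linarith) fun c hcpos => ?_
    have hm := iInf₂_le
      (f := fun X (_ : X ∈ prodSet Li) => ((pairing X Z - ∫ ω, S X ω * W ω ∂μ : ℝ) : EReal))
      (c • X₀) (smul_mem_prodSet hLi c hX₀)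
    have heq : pairing (c • X₀) Z - ∫ ω, S (c • X₀) ω * W ω ∂μ
        = c * (pairing X₀ Z - ∫ ω, S X₀ ω * W ω ∂μ) := by
      rw [pairing_smul_left, hval, hval, hph c hcpos X₀ hX₀, ip_smul_left]
      ring
    rw [heq] at hm
    exact hm

open scoped Classical in
/-- in the conic case `α` is the negative indicator function of the set `D`. -/
theorem statement13 {μ : Measure Ω} [IsProbabilityMeasure μ] {d : ℕ}
    (Li : Fin d → Set (Ω →ₘ[μ] ℝ)) (nrmX : Fin d → ((Ω →ₘ[μ] ℝ) → ℝ))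
    (EE : Set (Ω →ₘ[μ] ℝ)) (nrmE : (Ω →ₘ[μ] ℝ) → ℝ)
    (S : (Fin d → (Ω →ₘ[μ] ℝ)) → (Ω →ₘ[μ] ℝ)) (A : Set (Ω →ₘ[μ] ℝ))
    (hLi : ∀ i, IsAdmissible (Li i) (nrmX i))
    (hE : IsAdmissible EE nrmE)
    (hS : IsAdmissibleImpact (prodSet Li) (prodSet fun i => kdual (Li i)) EE (kdual EE) S)
    (hA : IsAdmissibleAcceptance (prodSet Li) EE (kdual EE) S A)
    -- `S` is positively homogeneous
    (hph : ∀ c : ℝ, 0 < c → ∀ X ∈ prodSet Li, S (c • X) = c • S X)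
    -- `A` is a cone
    (hcone : ∀ c : ℝ, 0 < c → ∀ U ∈ A, c • U ∈ A) :
    ∀ Z ∈ prodSet fun i => kdual (Li i),
      alpha (prodSet Li) (kdual EE) A S Z =
        if Z ∈ {Z' ∈ prodSet fun i => kdual (Li i) |
            (∀ i, (0 : Ω →ₘ[μ] ℝ) ≤ Z' i) ∧
            ∃ W ∈ barrS A (kdual EE), ∀ X ∈ prodSet Li,
              (∫ ω, S X ω * W ω ∂μ) ≤ pairing X Z'}
        then 0 else ⊥ := by
  intro Z hZ
  have h0mem : (0 : Fin d → (Ω →ₘ[μ] ℝ)) ∈ prodSet Li := zero_mem_prodSet hLi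
  have key : alpha (prodSet Li) (kdual EE) A S Z
      = ⨆ W ∈ barrS A (kdual EE),
          (if ∀ X ∈ prodSet Li, (∫ ω, S X ω * W ω ∂μ) ≤ pairing X Z then (0:EReal) else ⊥) := by
    unfold alpha penalty
    refine iSup_congr fun W => iSup_congr fun hW => ?_
    rw [suppS_conic hA.zero_mem hcone hW.2, conic_inf hLi hS.normalized hph Z W]
    split_ifs
    · exact zero_add 0
    · simp
  by_cases hcond : Z ∈ {Z' ∈ prodSet fun i => kdual (Li i) |
      (∀ i, (0 : Ω →ₘ[μ] ℝ) ≤ Z' i) ∧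
      ∃ W ∈ barrS A (kdual EE), ∀ X ∈ prodSet Li,
        (∫ ω, S X ω * W ω ∂μ) ≤ pairing X Z'}
  · rw [if_pos hcond, key]
    obtain ⟨hZ', hpos, W₀, hW₀b, hW₀⟩ := hcond
    refine le_antisymm (iSup₂_le fun W hW => ?_) ?_
    · split_ifs
      · exact le_refl _
      · exact bot_le
    · have hles := le_iSup₂ (f := fun W (_ : W ∈ barrS A (kdual EE)) =>
        if ∀ X ∈ prodSet Li, (∫ ω, S X ω * W ω ∂μ) ≤ pairing X Z then (0:EReal) else ⊥)
        W₀ hW₀b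
      rw [if_pos hW₀] at hles
      exact hles
  · rw [if_neg hcond, key]
    by_cases hQ : ∃ W ∈ barrS A (kdual EE), ∀ X ∈ prodSet Li,
        (∫ ω, S X ω * W ω ∂μ) ≤ pairing X Z
    · exfalso
      obtain ⟨W, hWb, hWdom⟩ := hQ
      have hW0 : (0 : Ω →ₘ[μ] ℝ) ≤ W := barrS_nonneg hE hA.zero_mem hA.mono hWb
      have hpos : ∀ i, (0 : Ω →ₘ[μ] ℝ) ≤ Z i := by
        intro i
        by_contra hZi
        have hZiint : Integrable (fun ω => Z i ω) μ :=
          kdual_integrable ((hLi i).linfty_subset _ one_mem_bdd) (hZ i)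
        obtain ⟨V, hVb, hVpos, hVneg⟩ := exists_neg_test (Z i) hZiint hZi
        set X : Fin d → (Ω →ₘ[μ] ℝ) := fun j => if j = i then V else 0 with hX_def
        have hXmem : X ∈ prodSet Li := by
          intro j
          by_cases hj : j = i
          · subst hj; simpa [hX_def] using (hLi j).linfty_subset V hVb
          · simpa [hX_def, hj] using (hLi j).zero_mem
        have hX0 : (0 : Fin d → (Ω →ₘ[μ] ℝ)) ≤ X := by
          refine Pi.le_def.mpr fun j => ?_
          by_cases hj : j = i
          · subst hj; simpa [hX_def] using hVpos
          · simp [hX_def, hj]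
        have hSX0 : (0 : Ω →ₘ[μ] ℝ) ≤ S X := by
          have := hS.mono 0 h0mem X hXmem hX0
          rwa [hS.normalized] at this
        have hge : 0 ≤ ∫ ω, S X ω * W ω ∂μ := by
          refine integral_nonneg_of_ae ?_
          filter_upwards [AEEqFun.coeFn_le.mpr hSX0, AEEqFun.coeFn_le.mpr hW0,
            AEEqFun.coeFn_zero (β := ℝ) (μ := μ)] with ω h1 h2 h3
          rw [h3] at h1 h2
          simp only [Pi.zero_apply] at h1 h2
          exact mul_nonneg h1 h2
        have hpair : pairing X Z = ip V (Z i) := by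
          unfold pairing
          rw [Finset.sum_eq_single i]
          · simp [hX_def]
          · intro j _ hj
            simp [hX_def, hj, ip_zero_left]
          · intro hi
            exact absurd (Finset.mem_univ i) hi
        have hd := hWdom X hXmem
        rw [hpair] at hd
        exact absurd (hd.trans_lt hVneg) (not_lt.mpr hge)
      exact hcond ⟨hZ, hpos, W, hWb, hWdom⟩
    · refine le_antisymm (iSup₂_le fun W hW => ?_) bot_le
      have hnall : ¬ ∀ X ∈ prodSet Li, (∫ ω, S X ω * W ω ∂μ) ≤ pairing X Z :=
        fun hall => hQ ⟨W, hW, hall⟩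
      rw [if_neg hnall]


end SystemicRisk
end
end

section
/- Let S : X → E be an admissible impact map and A ⊂ E an admissible acceptance set, and define ρ̃ : X → [−∞,∞] by ρ̃(X) = inf{m ∈ ℝ : S(X) + m ∈ A}. Then ρ̃ is convex, σ(X,X')-lower semicontinuous, and satisfies ρ̃(0) ≤ 0. Moreover, ρ̃ is proper if and only if ρ̃(0) > −∞, if and only if A ∩ (−ℝ_+) ≠ −ℝ_+ (where nonpositive reals are identified with constant random variables in E). -/
open MeasureTheory Filter Set
open scoped ENNReal

noncomputable section

namespace SystemicRisk

variable {Ω : Type*} [MeasurableSpace Ω]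

variable {d : ℕ}

/-- The "first aggregate, then allocate" systemic risk measure `ρ̃`. -/
def rhoT (μ : Measure Ω) {d : ℕ} (S : (Fin d → (Ω →ₘ[μ] ℝ)) → (Ω →ₘ[μ] ℝ))
    (A : Set (Ω →ₘ[μ] ℝ)) (X : Fin d → (Ω →ₘ[μ] ℝ)) : EReal :=
  ⨅ m ∈ {m : ℝ | S X + (AEEqFun.const Ω m : Ω →ₘ[μ] ℝ) ∈ A}, ((m : ℝ) : EReal)

/-! ### Auxiliary lemmas for STATEMENT 17 -/

section Aux17

open scoped Topology

variable {μ : Measure Ω} [IsProbabilityMeasure μ]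

lemma le_ae {f g : Ω →ₘ[μ] ℝ} (h : f ≤ g) : ∀ᵐ ω ∂μ, f ω ≤ g ω :=
  AEEqFun.coeFn_le.mpr h

lemma ae_le {f g : Ω →ₘ[μ] ℝ} (h : ∀ᵐ ω ∂μ, f ω ≤ g ω) : f ≤ g :=
  AEEqFun.coeFn_le.mp h

lemma const_zero : (AEEqFun.const Ω (0 : ℝ) : Ω →ₘ[μ] ℝ) = 0 := rfl

lemma const_add' (x y : ℝ) :
    (AEEqFun.const Ω (x + y) : Ω →ₘ[μ] ℝ) = AEEqFun.const Ω x + AEEqFun.const Ω y := by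
  apply AEEqFun.ext
  filter_upwards [AEEqFun.coeFn_add (AEEqFun.const Ω x : Ω →ₘ[μ] ℝ) (AEEqFun.const Ω y),
    AEEqFun.coeFn_const Ω x (μ := μ), AEEqFun.coeFn_const Ω y (μ := μ),
    AEEqFun.coeFn_const Ω (x + y) (μ := μ)] with ω h1 h2 h3 h4
  rw [h4, h1, Pi.add_apply, h2, h3]
  simp only [Function.const_apply]

lemma smul_const' (r x : ℝ) :
    r • (AEEqFun.const Ω x : Ω →ₘ[μ] ℝ) = AEEqFun.const Ω (r * x) := by
  apply AEEqFun.ext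
  filter_upwards [AEEqFun.coeFn_smul r (AEEqFun.const Ω x : Ω →ₘ[μ] ℝ),
    AEEqFun.coeFn_const Ω x (μ := μ), AEEqFun.coeFn_const Ω (r * x) (μ := μ)] with ω h1 h2 h3
  rw [h1, h3, Pi.smul_apply, h2, smul_eq_mul]
  simp only [Function.const_apply]

lemma essBdd_const (c : ℝ) : EssBdd (AEEqFun.const Ω c : Ω →ₘ[μ] ℝ) := by
  refine ⟨|c|, ?_⟩
  filter_upwards [AEEqFun.coeFn_const Ω c (μ := μ)] with ω h
  rw [h]
  simp only [Function.const_apply, le_refl]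

lemma ip_add' {U V W : Ω →ₘ[μ] ℝ} (hU : Integrable (fun ω => U ω * W ω) μ)
    (hV : Integrable (fun ω => V ω * W ω) μ) : ip (U + V) W = ip U W + ip V W := by
  unfold ip
  rw [← integral_add hU hV]
  refine integral_congr_ae ?_
  filter_upwards [AEEqFun.coeFn_add U V] with ω h
  rw [h, Pi.add_apply]
  ring

lemma ip_smul' (c : ℝ) (U W : Ω →ₘ[μ] ℝ) : ip (c • U) W = c * ip U W := by
  unfold ip
  rw [← integral_const_mul]
  refine integral_congr_ae ?_
  filter_upwards [AEEqFun.coeFn_smul c U] with ω h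
  rw [h, Pi.smul_apply, smul_eq_mul]
  ring

lemma ip_const' (m : ℝ) (W : Ω →ₘ[μ] ℝ) :
    ip (AEEqFun.const Ω m : Ω →ₘ[μ] ℝ) W = m * ∫ ω, W ω ∂μ := by
  unfold ip
  rw [← integral_const_mul]
  refine integral_congr_ae ?_
  filter_upwards [AEEqFun.coeFn_const Ω m (μ := μ)] with ω h
  rw [h]
  simp only [Function.const_apply]

lemma ip_zero' (W : Ω →ₘ[μ] ℝ) : ip (0 : Ω →ₘ[μ] ℝ) W = 0 := by
  rw [← const_zero, ip_const', zero_mul]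

lemma integrable_of_kdual {EE : Set (Ω →ₘ[μ] ℝ)} {nrmE : (Ω →ₘ[μ] ℝ) → ℝ}
    (hE : IsAdmissible EE nrmE) {ψ : Ω →ₘ[μ] ℝ} (hψ : ψ ∈ kdual EE) :
    Integrable (⇑ψ) μ := by
  have h1 : (AEEqFun.const Ω (1 : ℝ) : Ω →ₘ[μ] ℝ) ∈ EE :=
    hE.linfty_subset _ (essBdd_const 1)
  refine (hψ _ h1).congr ?_
  filter_upwards [AEEqFun.coeFn_const Ω (1 : ℝ) (μ := μ)] with ω h
  rw [h]
  simp [Function.const]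

lemma usc_superlevel {P : Type*} [TopologicalSpace P] {f : P → ℝ}
    (hf : UpperSemicontinuous f) (r : ℝ) : IsClosed {x : P | r ≤ f x} := by
  rw [← isOpen_compl_iff, isOpen_iff_mem_nhds]
  intro x hx
  have hlt : f x < r := not_le.mp hx
  have h2 : ∀ᶠ y in 𝓝 x, f y < r := hf x r hlt
  exact h2.mono fun y hy => not_le.mpr hy

lemma EReal_mul_ne_bot_of_pos {x : ℝ} (hx : 0 < x) {z : EReal} (hz : z ≠ ⊥) :
    (x : EReal) * z ≠ ⊥ := by
  induction z using EReal.rec with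
  | bot => exact absurd rfl hz
  | coe r => rw [← EReal.coe_mul]; exact EReal.coe_ne_bot _
  | top => rw [EReal.coe_mul_top_of_pos hx]; simp

/-- Continuous linear functionals on a product `ι → ℝ` are finitely supported. -/
lemma exists_finset_repr {ι : Type*} [DecidableEq ι] (g : ((ι → ℝ) →L[ℝ] ℝ)) :
    ∃ J : Finset ι, ∀ h : ι → ℝ, g h = ∑ j ∈ J, h j * g (Pi.single j 1) := by
  have hmem : g ⁻¹' (Metric.ball (0 : ℝ) 1) ∈ 𝓝 (0 : ι → ℝ) := by
    have hc : ContinuousAt g 0 := g.continuous.continuousAt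
    apply hc.preimage_mem_nhds
    rw [map_zero]
    exact Metric.ball_mem_nhds _ one_pos
  rw [nhds_pi, Filter.mem_pi] at hmem
  obtain ⟨I, hIfin, t, htmem, hsub⟩ := hmem
  have key : ∀ h : ι → ℝ, (∀ j ∈ I, h j = 0) → g h = 0 := by
    intro h hh
    by_contra hne
    have hmem' : (g h)⁻¹ • h ∈ I.pi t := by
      intro i hi
      simp only [Pi.smul_apply, hh i hi, smul_zero]
      exact mem_of_mem_nhds (htmem i)
    have hball := hsub hmem'
    rw [Set.mem_preimage, Metric.mem_ball, dist_zero_right, Real.norm_eq_abs,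
      _root_.map_smul, smul_eq_mul, inv_mul_cancel₀ hne] at hball
    norm_num at hball
  refine ⟨hIfin.toFinset, fun h => ?_⟩
  have hzero : g (h - ∑ j ∈ hIfin.toFinset, h j • (Pi.single j 1 : ι → ℝ)) = 0 := by
    apply key
    intro j hj
    have hj' : j ∈ hIfin.toFinset := hIfin.mem_toFinset.mpr hj
    simp only [Pi.sub_apply, Finset.sum_apply, Pi.smul_apply, smul_eq_mul]
    rw [Finset.sum_eq_single j (fun i _ hne => by rw [Pi.single_eq_of_ne (Ne.symm hne), mul_zero])
      (fun habs => absurd hj' habs)]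
    rw [Pi.single_eq_same]
    ring
  have heq : g h = g (∑ j ∈ hIfin.toFinset, h j • (Pi.single j 1 : ι → ℝ)) := by
    have := hzero
    rwa [map_sub, sub_eq_zero] at this
  rw [heq, map_sum]
  exact Finset.sum_congr rfl fun j _ => by rw [_root_.map_smul, smul_eq_mul]

/-- Hahn–Banach separation of a point from an admissible acceptance set, with a
nonnegative separating functional in the Köthe dual. -/
lemma separation {EE : Set (Ω →ₘ[μ] ℝ)} {nrmE : (Ω →ₘ[μ] ℝ) → ℝ} (hE : IsAdmissible EE nrmE)
    {A : Set (Ω →ₘ[μ] ℝ)} (hAsub : A ⊆ EE) (hA0 : (0 : Ω →ₘ[μ] ℝ) ∈ A)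
    (hAconv : ∀ U ∈ A, ∀ V ∈ A, ∀ t : ℝ, 0 ≤ t → t ≤ 1 → t • U + (1 - t) • V ∈ A)
    (hAmono : ∀ U ∈ A, ∀ V ∈ EE, (0 : Ω →ₘ[μ] ℝ) ≤ V → U + V ∈ A)
    (hAcl : @IsClosed (↥EE) (wtop1 EE (kdual EE)) {U : ↥EE | (U : Ω →ₘ[μ] ℝ) ∈ A})
    {U₀ : Ω →ₘ[μ] ℝ} (hU₀E : U₀ ∈ EE) (hU₀ : U₀ ∉ A) :
    ∃ ψ ∈ kdual EE, (0 : Ω →ₘ[μ] ℝ) ≤ ψ ∧ ∃ c : ℝ,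
      ip U₀ ψ < c ∧ ∀ V ∈ A, c ≤ ip V ψ := by
  classical
  set T : ↥EE → (↥(kdual EE) → ℝ) :=
    fun U : ↥EE => fun W : ↥(kdual EE) => ip (U : Ω →ₘ[μ] ℝ) (W : Ω →ₘ[μ] ℝ) with hT
  have hAcl' : ∃ C : Set (↥(kdual EE) → ℝ), IsClosed C ∧
      T ⁻¹' C = {U : ↥EE | (U : Ω →ₘ[μ] ℝ) ∈ A} := by
    rw [show wtop1 EE (kdual EE) = TopologicalSpace.induced T Pi.topologicalSpace from rfl]
      at hAcl
    exact isClosed_induced_iff.mp hAcl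
  obtain ⟨C, hCcl, hCpre⟩ := hAcl'
  set sA : Set (↥(kdual EE) → ℝ) := T '' {U : ↥EE | (U : Ω →ₘ[μ] ℝ) ∈ A} with hsA
  have hconv : Convex ℝ sA := by
    rintro x ⟨u, hu, rfl⟩ y ⟨v, hv, rfl⟩ a b ha hb hab
    have hb' : b = 1 - a := by linarith
    have hmem : (a • (u : Ω →ₘ[μ] ℝ) + (1 - a) • (v : Ω →ₘ[μ] ℝ)) ∈ A :=
      hAconv _ hu _ hv a ha (by linarith)
    refine ⟨⟨_, hAsub hmem⟩, hmem, ?_⟩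
    funext W
    have h1 : Integrable (fun ω => (a • (u : Ω →ₘ[μ] ℝ)) ω * (W : Ω →ₘ[μ] ℝ) ω) μ :=
      W.2 _ (hE.smul_mem a _ (hAsub hu))
    have h2 : Integrable (fun ω => ((1 - a) • (v : Ω →ₘ[μ] ℝ)) ω * (W : Ω →ₘ[μ] ℝ) ω) μ :=
      W.2 _ (hE.smul_mem _ _ (hAsub hv))
    show ip _ _ = _
    rw [ip_add' h1 h2, ip_smul', ip_smul']
    simp only [Pi.add_apply, Pi.smul_apply, smul_eq_mul, hT, hb']
  have hsub : closure sA ⊆ C := by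
    refine closure_minimal ?_ hCcl
    rintro x ⟨u, hu, rfl⟩
    have : u ∈ T ⁻¹' C := by rw [hCpre]; exact hu
    exact this
  have hx : T ⟨U₀, hU₀E⟩ ∉ closure sA := by
    intro hmem
    apply hU₀
    have : (⟨U₀, hU₀E⟩ : ↥EE) ∈ T ⁻¹' C := hsub hmem
    rwa [hCpre] at this
  obtain ⟨f, u, hfx, hfA⟩ :=
    geometric_hahn_banach_point_closed (hconv.closure) isClosed_closure hx
  obtain ⟨J, hJ⟩ := exists_finset_repr f
  set lam : ↥(kdual EE) → ℝ := fun j => f (Pi.single j 1) with hlam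
  set φ : Ω → ℝ := fun ω => ∑ j ∈ J, lam j * ((j : Ω →ₘ[μ] ℝ)) ω with hφ
  have hφm : AEStronglyMeasurable φ μ :=
    (Finset.measurable_sum J fun j _ =>
      ((j : Ω →ₘ[μ] ℝ)).measurable.const_mul _).aestronglyMeasurable
  set ψ : Ω →ₘ[μ] ℝ := AEEqFun.mk φ hφm with hψdef
  have hψk : ψ ∈ kdual EE := by
    intro V hV
    have hint : Integrable (fun ω => ∑ j ∈ J, lam j * (V ω * (j : Ω →ₘ[μ] ℝ) ω)) μ :=
      integrable_finset_sum _ fun j _ => ((j.2 V hV).const_mul (lam j))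
    refine hint.congr ?_
    filter_upwards [AEEqFun.coeFn_mk φ hφm] with ω h
    rw [h]
    show ∑ j ∈ J, lam j * (V ω * (j : Ω →ₘ[μ] ℝ) ω) = V ω * ∑ j ∈ J, lam j * (j : Ω →ₘ[μ] ℝ) ω
    rw [Finset.mul_sum]
    exact Finset.sum_congr rfl fun j _ => by ring
  have hψpair : ∀ w : ↥EE, ip (w : Ω →ₘ[μ] ℝ) ψ = f (T w) := by
    intro w
    have h1 : ∀ j ∈ J,
        Integrable (fun ω => lam j * ((w : Ω →ₘ[μ] ℝ) ω * (j : Ω →ₘ[μ] ℝ) ω)) μ :=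
      fun j _ => (j.2 _ w.2).const_mul _
    have hW : ip (w : Ω →ₘ[μ] ℝ) ψ
        = ∑ j ∈ J, lam j * ip (w : Ω →ₘ[μ] ℝ) (j : Ω →ₘ[μ] ℝ) := by
      unfold ip
      rw [show (∫ ω, (w : Ω →ₘ[μ] ℝ) ω * ψ ω ∂μ)
          = ∫ ω, ∑ j ∈ J, lam j * ((w : Ω →ₘ[μ] ℝ) ω * (j : Ω →ₘ[μ] ℝ) ω) ∂μ from
        integral_congr_ae (by
          filter_upwards [AEEqFun.coeFn_mk φ hφm] with ω h
          rw [h]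
          show (w : Ω →ₘ[μ] ℝ) ω * ∑ j ∈ J, lam j * (j : Ω →ₘ[μ] ℝ) ω = _
          rw [Finset.mul_sum]
          exact Finset.sum_congr rfl fun j _ => by ring)]
      rw [integral_finset_sum _ h1]
      exact Finset.sum_congr rfl fun j _ => integral_const_mul _ _
    rw [hW, hJ (T w)]
    exact Finset.sum_congr rfl fun j _ => by rw [hlam]; ring
  have hAbound : ∀ V ∈ A, u ≤ ip V ψ := by
    intro V hV
    have hmem : T ⟨V, hAsub hV⟩ ∈ closure sA := subset_closure ⟨⟨V, hAsub hV⟩, hV, rfl⟩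
    have := hfA _ hmem
    rw [hψpair ⟨V, hAsub hV⟩]
    exact this.le
  have hpos : ∀ W, W ∈ EE → (0 : Ω →ₘ[μ] ℝ) ≤ W → 0 ≤ ip W ψ := by
    intro W hWE hW
    by_contra hneg
    push_neg at hneg
    set r := ip W ψ with hr
    set s : ℝ := max 1 ((u - 1) / r) with hs
    have hs0 : (0 : ℝ) < s := lt_of_lt_of_le one_pos (le_max_left _ _)
    have hsW0 : (0 : Ω →ₘ[μ] ℝ) ≤ s • W := by
      refine ae_le ?_
      filter_upwards [le_ae hW, AEEqFun.coeFn_smul s W, AEEqFun.coeFn_zero (μ := μ) (β := ℝ)]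
        with ω h1 h2 h3
      rw [h2, h3, Pi.smul_apply, smul_eq_mul]
      rw [h3] at h1
      exact mul_nonneg hs0.le h1
    have hsWA : s • W ∈ A := by
      have := hAmono 0 hA0 (s • W) (hE.smul_mem s W hWE) hsW0
      rwa [zero_add] at this
    have hub := hAbound _ hsWA
    rw [ip_smul'] at hub
    have h2 : (u - 1) / r ≤ s := le_max_right _ _
    have h3 : s * r ≤ (u - 1) / r * r := mul_le_mul_of_nonpos_right h2 hneg.le
    rw [div_mul_cancel₀ _ (ne_of_lt hneg)] at h3
    linarith
  have hψ0 : (0 : Ω →ₘ[μ] ℝ) ≤ ψ := by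
    set N : Set Ω := {ω | ψ ω < 0} with hN
    have hNm : MeasurableSet N := measurableSet_lt ψ.measurable measurable_const
    set w : Ω → ℝ := N.indicator (fun _ => (1 : ℝ)) with hw
    have hwm : Measurable w := measurable_const.indicator hNm
    set W : Ω →ₘ[μ] ℝ := AEEqFun.mk w hwm.aestronglyMeasurable with hWdef
    have hWE : W ∈ EE := by
      refine hE.linfty_subset _ ⟨1, ?_⟩
      filter_upwards [AEEqFun.coeFn_mk w hwm.aestronglyMeasurable] with ω h
      rw [h, hw]
      by_cases hω : ω ∈ N <;> simp [Set.indicator_apply, hω]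
    have hW0 : (0 : Ω →ₘ[μ] ℝ) ≤ W := by
      refine ae_le ?_
      filter_upwards [AEEqFun.coeFn_mk w hwm.aestronglyMeasurable,
        AEEqFun.coeFn_zero (μ := μ) (β := ℝ)] with ω h h0
      rw [h, h0, hw]
      by_cases hω : ω ∈ N <;> simp [Set.indicator_apply, hω]
    have hge := hpos W hWE hW0
    have hint : Integrable (fun ω => W ω * ψ ω) μ := hψk W hWE
    set g : Ω → ℝ := fun ω => N.indicator (fun _ => (1 : ℝ)) ω * ψ ω with hg
    have hg_ae : (fun ω => W ω * ψ ω) =ᵐ[μ] g := by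
      filter_upwards [AEEqFun.coeFn_mk w hwm.aestronglyMeasurable] with ω h
      rw [hg]
      show W ω * ψ ω = _
      rw [h]
    have hgint : Integrable g μ := hint.congr hg_ae
    have hgle : ∀ ω, g ω ≤ 0 := by
      intro ω
      by_cases hω : ω ∈ N
      · have hlt : ψ ω < 0 := hω
        simp only [hg, Set.indicator_apply, hω, if_true]
        linarith
      · simp [hg, Set.indicator_apply, hω]
    have hipW : ip W ψ = ∫ ω, g ω ∂μ := integral_congr_ae hg_ae
    have hint0 : ∫ ω, g ω ∂μ = 0 :=
      le_antisymm (integral_nonpos hgle) (hipW ▸ hge)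
    have hzero_ae : (fun ω => -g ω) =ᵐ[μ] 0 := by
      have hneg0 : ∫ ω, -g ω ∂μ = 0 := by rw [integral_neg, hint0, neg_zero]
      exact (integral_eq_zero_iff_of_nonneg_ae
        (Filter.Eventually.of_forall fun ω => neg_nonneg.mpr (hgle ω)) hgint.neg).mp hneg0
    have hψae : ∀ᵐ ω ∂μ, 0 ≤ ψ ω := by
      filter_upwards [hzero_ae] with ω h
      by_contra hlt
      push_neg at hlt
      have hω : ω ∈ N := hlt
      have hgψ : g ω = ψ ω := by simp [hg, Set.indicator_apply, hω]
      have : -g ω = 0 := h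
      rw [hgψ] at this
      linarith
    refine ae_le ?_
    filter_upwards [hψae, AEEqFun.coeFn_zero (μ := μ) (β := ℝ)] with ω h h0
    rw [h0]
    exact h
  refine ⟨ψ, hψk, hψ0, u, ?_, hAbound⟩
  rw [show ip U₀ ψ = f (T ⟨U₀, hU₀E⟩) from hψpair ⟨U₀, hU₀E⟩]
  exact hfx

lemma exists_dual {EE : Set (Ω →ₘ[μ] ℝ)} {nrmE : (Ω →ₘ[μ] ℝ) → ℝ} (hE : IsAdmissible EE nrmE)
    {A : Set (Ω →ₘ[μ] ℝ)} (hAsub : A ⊆ EE) (hA0 : (0 : Ω →ₘ[μ] ℝ) ∈ A)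
    (hAconv : ∀ U ∈ A, ∀ V ∈ A, ∀ t : ℝ, 0 ≤ t → t ≤ 1 → t • U + (1 - t) • V ∈ A)
    (hAmono : ∀ U ∈ A, ∀ V ∈ EE, (0 : Ω →ₘ[μ] ℝ) ≤ V → U + V ∈ A)
    (hAcl : @IsClosed (↥EE) (wtop1 EE (kdual EE)) {U : ↥EE | (U : Ω →ₘ[μ] ℝ) ∈ A})
    {U₀ : Ω →ₘ[μ] ℝ} (hU₀E : U₀ ∈ EE) (hU₀ : U₀ ∉ A) :
    ∃ ψ ∈ kdual EE, (0 : Ω →ₘ[μ] ℝ) ≤ ψ ∧ 0 < (∫ ω, ψ ω ∂μ) ∧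
      ∃ c : ℝ, c ≤ 0 ∧ ∀ V ∈ A, c ≤ ip V ψ := by
  obtain ⟨ψ, hψk, hψ0, c, hlt, hbd⟩ :=
    separation hE hAsub hA0 hAconv hAmono hAcl hU₀E hU₀
  have hψint : Integrable (⇑ψ) μ := integrable_of_kdual hE hψk
  have hae : ∀ᵐ ω ∂μ, 0 ≤ ψ ω := by
    filter_upwards [le_ae hψ0, AEEqFun.coeFn_zero (μ := μ) (β := ℝ)] with ω h h0
    rw [h0] at h
    exact h
  have hc0 : c ≤ 0 := by
    have := hbd 0 hA0
    rw [ip_zero'] at this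
    exact this
  have hI : 0 < ∫ ω, ψ ω ∂μ := by
    rcases lt_or_eq_of_le (integral_nonneg_of_ae hae) with h | h
    · exact h
    · exfalso
      have hψz : (⇑ψ) =ᵐ[μ] 0 := (integral_eq_zero_iff_of_nonneg_ae hae hψint).mp h.symm
      have hU0 : ip U₀ ψ = 0 := by
        unfold ip
        rw [show (∫ ω, U₀ ω * ψ ω ∂μ) = ∫ _ω, (0 : ℝ) ∂μ from
          integral_congr_ae (by filter_upwards [hψz] with ω h'; simp [h'])]
        simp
      rw [hU0] at hlt
      linarith
  exact ⟨ψ, hψk, hψ0, hI, c, hc0, hbd⟩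

lemma closed_pre {EE : Set (Ω →ₘ[μ] ℝ)} {A : Set (Ω →ₘ[μ] ℝ)}
    (hAcl : @IsClosed (↥EE) (wtop1 EE (kdual EE)) {U : ↥EE | (U : Ω →ₘ[μ] ℝ) ∈ A})
    {P : Type*} [TopologicalSpace P] (G : P → ↥EE)
    (hG : Continuous fun p => fun W : ↥(kdual EE) =>
      ip ((G p : ↥EE) : Ω →ₘ[μ] ℝ) (W : Ω →ₘ[μ] ℝ)) :
    IsClosed {p : P | ((G p : ↥EE) : Ω →ₘ[μ] ℝ) ∈ A} := by
  letI : TopologicalSpace ↥EE := wtop1 EE (kdual EE)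
  have hGc : Continuous G := continuous_induced_rng.mpr hG
  exact hAcl.preimage hGc

lemma mem_A_iff {EE : Set (Ω →ₘ[μ] ℝ)} {nrmE : (Ω →ₘ[μ] ℝ) → ℝ} (hE : IsAdmissible EE nrmE)
    {A : Set (Ω →ₘ[μ] ℝ)} (hAsub : A ⊆ EE) (hA0 : (0 : Ω →ₘ[μ] ℝ) ∈ A)
    (hAconv : ∀ U ∈ A, ∀ V ∈ A, ∀ t : ℝ, 0 ≤ t → t ≤ 1 → t • U + (1 - t) • V ∈ A)
    (hAmono : ∀ U ∈ A, ∀ V ∈ EE, (0 : Ω →ₘ[μ] ℝ) ≤ V → U + V ∈ A)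
    (hAcl : @IsClosed (↥EE) (wtop1 EE (kdual EE)) {U : ↥EE | (U : Ω →ₘ[μ] ℝ) ∈ A})
    {U : Ω →ₘ[μ] ℝ} (hUE : U ∈ EE) :
    U ∈ A ↔ ∀ ψ ∈ kdual EE, (0 : Ω →ₘ[μ] ℝ) ≤ ψ →
      ∀ c : ℝ, (∀ V ∈ A, c ≤ ip V ψ) → c ≤ ip U ψ := by
  constructor
  · exact fun hU ψ _ _ c hc => hc U hU
  · intro h
    by_contra hU
    obtain ⟨ψ, hψk, hψ0, c, hlt, hbd⟩ :=
      separation hE hAsub hA0 hAconv hAmono hAcl hUE hU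
    exact absurd (h ψ hψk hψ0 c hbd) (not_le.mpr hlt)

end Aux17

open scoped Topology

/-- basic properties of `ρ̃` and characterization of its properness. -/
theorem statement17 {μ : Measure Ω} [IsProbabilityMeasure μ] {d : ℕ}
    (Li : Fin d → Set (Ω →ₘ[μ] ℝ)) (nrmX : Fin d → ((Ω →ₘ[μ] ℝ) → ℝ))
    (EE : Set (Ω →ₘ[μ] ℝ)) (nrmE : (Ω →ₘ[μ] ℝ) → ℝ)
    (S : (Fin d → (Ω →ₘ[μ] ℝ)) → (Ω →ₘ[μ] ℝ)) (A : Set (Ω →ₘ[μ] ℝ))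
    (hLi : ∀ i, IsAdmissible (Li i) (nrmX i))
    (hE : IsAdmissible EE nrmE)
    (hS : IsAdmissibleImpact (prodSet Li) (prodSet fun i => kdual (Li i)) EE (kdual EE) S)
    (hA : IsAdmissibleAcceptance (prodSet Li) EE (kdual EE) S A) :
    -- convexity
    (∀ X ∈ prodSet Li, ∀ Y ∈ prodSet Li, ∀ t : ℝ, 0 ≤ t → t ≤ 1 →
        rhoT μ S A (t • X + (1 - t) • Y) ≤
          (t : EReal) * rhoT μ S A X + ((1 - t : ℝ) : EReal) * rhoT μ S A Y) ∧
    -- `σ(X,X')`-lower semicontinuity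
    (@LowerSemicontinuous (↥(prodSet Li)) EReal
        (wtop (prodSet Li) (prodSet fun i => kdual (Li i))) _
        (fun X : ↥(prodSet Li) => rhoT μ S A (X : Fin d → (Ω →ₘ[μ] ℝ)))) ∧
    -- `ρ̃(0) ≤ 0`
    (rhoT μ S A 0 ≤ 0) ∧
    -- properness characterizations
    (ProperOn (prodSet Li) (rhoT μ S A) ↔ ⊥ < rhoT μ S A 0) ∧
    (ProperOn (prodSet Li) (rhoT μ S A) ↔
      A ∩ {U : Ω →ₘ[μ] ℝ | ∃ c : ℝ, c ≤ 0 ∧ U = (AEEqFun.const Ω c : Ω →ₘ[μ] ℝ)} ≠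
        {U : Ω →ₘ[μ] ℝ | ∃ c : ℝ, c ≤ 0 ∧ U = (AEEqFun.const Ω c : Ω →ₘ[μ] ℝ)}) := by
  classical
  have hconstE : ∀ m : ℝ, (AEEqFun.const Ω m : Ω →ₘ[μ] ℝ) ∈ EE := fun m =>
    hE.linfty_subset _ (essBdd_const m)
  obtain ⟨X₀, hX₀X, hX₀n⟩ := hA.preimage_proper
  obtain ⟨ψ, hψk, hψ0, hIψ, c₀, hc₀, hbd⟩ :=
    exists_dual hE hA.subset hA.zero_mem hA.convex hA.mono hA.closed (hS.mapsTo X₀ hX₀X) hX₀n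
  -- lower bound for `rhoT`
  have hlb : ∀ X, S X ∈ EE →
      (((c₀ - ip (S X) ψ) / (∫ ω, ψ ω ∂μ) : ℝ) : EReal) ≤ rhoT μ S A X := by
    intro X hXE
    rw [rhoT]
    refine le_iInf₂ fun m hm => ?_
    rw [EReal.coe_le_coe_iff]
    have h1 := hbd _ hm
    rw [ip_add' (hψk _ hXE) (hψk _ (hconstE m)), ip_const'] at h1
    rw [div_le_iff₀ hIψ]
    linarith
  have hne_bot : ∀ X, S X ∈ EE → ⊥ < rhoT μ S A X := fun X hXE =>
    lt_of_lt_of_le (EReal.bot_lt_coe _) (hlb X hXE)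
  -- upward closedness of the feasible set
  have hup : ∀ X, S X ∈ EE → ∀ m m' : ℝ, m ≤ m' →
      S X + AEEqFun.const Ω m ∈ A → S X + AEEqFun.const Ω m' ∈ A := by
    intro X hXE m m' hmm hm
    have hring : m + (m' - m) = m' := by ring
    have heq : S X + (AEEqFun.const Ω m' : Ω →ₘ[μ] ℝ)
        = (S X + AEEqFun.const Ω m) + AEEqFun.const Ω (m' - m) := by
      rw [add_assoc, ← const_add', hring]
    rw [heq]
    refine hA.mono _ hm _ (hconstE _) (ae_le ?_)
    filter_upwards [AEEqFun.coeFn_const Ω (m' - m) (μ := μ),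
      AEEqFun.coeFn_zero (β := ℝ) (μ := μ)] with ω h1 h2
    rw [h1, h2]
    simp only [Function.const_apply, Pi.zero_apply]
    linarith
  -- the feasible set is closed in `ℝ`
  have hfs_closed : ∀ X, S X ∈ EE →
      IsClosed {m : ℝ | S X + AEEqFun.const Ω m ∈ A} := by
    intro X hXE
    exact closed_pre hA.closed
      (fun m : ℝ => (⟨S X + AEEqFun.const Ω m, hE.add_mem _ hXE _ (hconstE m)⟩ : ↥EE))
      (by
        rw [continuous_pi_iff]
        intro W
        show Continuous fun m : ℝ => ip (S X + AEEqFun.const Ω m) (W : Ω →ₘ[μ] ℝ)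
        have hfun : (fun m : ℝ => ip (S X + AEEqFun.const Ω m) (W : Ω →ₘ[μ] ℝ))
            = fun m : ℝ => ip (S X) (W : Ω →ₘ[μ] ℝ) + m * ∫ ω, (W : Ω →ₘ[μ] ℝ) ω ∂μ :=
          funext fun m => by rw [ip_add' (W.2 _ hXE) (W.2 _ (hconstE m)), ip_const']
        rw [hfun]
        exact continuous_const.add (continuous_id.mul continuous_const))
  -- characterization of the sublevel sets
  have hle_iff : ∀ X, S X ∈ EE → ∀ y : ℝ,
      (rhoT μ S A X ≤ (y : EReal) ↔ S X + AEEqFun.const Ω y ∈ A) := by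
    intro X hXE y
    constructor
    · intro h
      have hstep : ∀ ε : ℝ, 0 < ε → S X + AEEqFun.const Ω (y + ε) ∈ A := by
        intro ε hε
        have hlt : rhoT μ S A X < ((y + ε : ℝ) : EReal) :=
          lt_of_le_of_lt h (by exact_mod_cast lt_add_of_pos_right y hε)
        rw [rhoT, iInf_lt_iff] at hlt
        obtain ⟨m, hm⟩ := hlt
        rw [iInf_lt_iff] at hm
        obtain ⟨hmA, hmlt⟩ := hm
        exact hup X hXE m (y + ε) (by exact_mod_cast hmlt.le) hmA
      have htend : Filter.Tendsto (fun n : ℕ => y + 1 / ((n : ℝ) + 1)) atTop (𝓝 y) := by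
        have h2 := tendsto_one_div_add_atTop_nhds_zero_nat.const_add y
        simpa using h2
      exact (hfs_closed X hXE).mem_of_tendsto htend
        (Filter.Eventually.of_forall fun n => hstep _ (by positivity))
    · intro h
      rw [rhoT]
      exact iInf₂_le y h
  -- convex combinations of feasible levels are feasible
  have hfeas : ∀ X ∈ prodSet Li, ∀ Y ∈ prodSet Li, ∀ t : ℝ, 0 ≤ t → t ≤ 1 → ∀ a b : ℝ,
      S X + AEEqFun.const Ω a ∈ A → S Y + AEEqFun.const Ω b ∈ A →
      S (t • X + (1 - t) • Y) + AEEqFun.const Ω (t * a + (1 - t) * b) ∈ A := by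
    intro X hX Y hY t ht0 ht1 a b ha hb
    have hZX : t • X + (1 - t) • Y ∈ prodSet Li := fun i =>
      (hLi i).add_mem _ ((hLi i).smul_mem t _ (hX i)) _ ((hLi i).smul_mem _ _ (hY i))
    have hSX : S X ∈ EE := hS.mapsTo X hX
    have hSY : S Y ∈ EE := hS.mapsTo Y hY
    have hSZ : S (t • X + (1 - t) • Y) ∈ EE := hS.mapsTo _ hZX
    have hU : t • (S X + AEEqFun.const Ω a) + (1 - t) • (S Y + AEEqFun.const Ω b) ∈ A :=
      hA.convex _ ha _ hb t ht0 ht1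
    set V : Ω →ₘ[μ] ℝ := S (t • X + (1 - t) • Y) - (t • S X + (1 - t) • S Y) with hVdef
    have hVmem : V ∈ EE := by
      have h1 : t • S X + (1 - t) • S Y ∈ EE :=
        hE.add_mem _ (hE.smul_mem _ _ hSX) _ (hE.smul_mem _ _ hSY)
      have h2 : (-(1 : ℝ)) • (t • S X + (1 - t) • S Y) ∈ EE := hE.smul_mem _ _ h1
      have heq : V = S (t • X + (1 - t) • Y) + (-(1 : ℝ)) • (t • S X + (1 - t) • S Y) := by
        rw [neg_one_smul, hVdef, sub_eq_add_neg]
      rw [heq]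
      exact hE.add_mem _ hSZ _ h2
    have hV0 : (0 : Ω →ₘ[μ] ℝ) ≤ V := by
      have hcon := hS.concave X hX Y hY t ht0 ht1
      refine ae_le ?_
      filter_upwards [le_ae hcon,
        AEEqFun.coeFn_sub (S (t • X + (1 - t) • Y)) (t • S X + (1 - t) • S Y),
        AEEqFun.coeFn_zero (β := ℝ) (μ := μ)] with ω h1 h2 h3
      rw [h3, hVdef, h2, Pi.sub_apply, Pi.zero_apply]
      exact sub_nonneg.mpr h1
    have hUW : t • (S X + AEEqFun.const Ω a) + (1 - t) • (S Y + AEEqFun.const Ω b)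
        = (t • S X + (1 - t) • S Y) + AEEqFun.const Ω (t * a + (1 - t) * b) := by
      rw [smul_add, smul_add, smul_const', smul_const', const_add']
      abel
    have hfinal : S (t • X + (1 - t) • Y) + AEEqFun.const Ω (t * a + (1 - t) * b)
        = (t • (S X + AEEqFun.const Ω a) + (1 - t) • (S Y + AEEqFun.const Ω b)) + V := by
      rw [hUW, hVdef]
      abel
    rw [hfinal]
    exact hA.mono _ hU _ hVmem hV0
  -- extraction of nearly optimal feasible levels
  have hex : ∀ (Z : Fin d → (Ω →ₘ[μ] ℝ)) (r : ℝ), rhoT μ S A Z < (r : EReal) →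
      ∃ a : ℝ, a < r ∧ S Z + AEEqFun.const Ω a ∈ A := by
    intro Z r hr
    rw [rhoT, iInf_lt_iff] at hr
    obtain ⟨a, ha⟩ := hr
    rw [iInf_lt_iff] at ha
    obtain ⟨hmem, hlt⟩ := ha
    exact ⟨a, by exact_mod_cast hlt, hmem⟩
  have h0mem : (0 : Fin d → Ω →ₘ[μ] ℝ) ∈ prodSet Li := fun i => (hLi i).zero_mem
  have hρ0 : rhoT μ S A 0 ≤ 0 := by
    have hmem : S (0 : Fin d → Ω →ₘ[μ] ℝ) + AEEqFun.const Ω (0 : ℝ) ∈ A := by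
      rw [hS.normalized, const_zero, add_zero]
      exact hA.zero_mem
    have hle : rhoT μ S A 0 ≤ ((0 : ℝ) : EReal) := by
      rw [rhoT]
      exact iInf₂_le (0 : ℝ) hmem
    exact_mod_cast hle
  have hproper : ProperOn (prodSet Li) (rhoT μ S A) := by
    constructor
    · exact fun X hX => (hne_bot X (hS.mapsTo X hX)).ne'
    · obtain ⟨X₁, hX₁, hX₁A⟩ := hA.preimage_nonempty
      refine ⟨X₁, hX₁, ?_⟩
      have hmem : S X₁ + AEEqFun.const Ω (0 : ℝ) ∈ A := by
        rw [const_zero, add_zero]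
        exact hX₁A
      have hle : rhoT μ S A X₁ ≤ ((0 : ℝ) : EReal) := by
        rw [rhoT]
        exact iInf₂_le (0 : ℝ) hmem
      exact ne_top_of_le_ne_top (by simp) hle
  refine ⟨?_, ?_, hρ0, ?_, ?_⟩
  · -- convexity
    intro X hX Y hY t ht0 ht1
    rcases eq_or_lt_of_le ht0 with rfl | ht0'
    · have hL : (0 : ℝ) • X + (1 - (0 : ℝ)) • Y = Y := by
        rw [zero_smul, sub_zero, one_smul, zero_add]
      rw [hL, show ((0 : ℝ) : EReal) = 0 from rfl, zero_mul, zero_add,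
        show ((1 - (0 : ℝ) : ℝ) : EReal) = 1 from by norm_num, one_mul]
    rcases eq_or_lt_of_le ht1 with rfl | ht1'
    · have hL : (1 : ℝ) • X + (1 - (1 : ℝ)) • Y = X := by
        rw [one_smul, sub_self, zero_smul, add_zero]
      rw [hL, show ((1 : ℝ) : EReal) = 1 from rfl, one_mul,
        show ((1 - (1 : ℝ) : ℝ) : EReal) = 0 from by norm_num, zero_mul, add_zero]
    by_cases hXtop : rhoT μ S A X = ⊤
    · rw [hXtop, EReal.coe_mul_top_of_pos ht0',
        EReal.top_add_of_ne_bot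
          (EReal_mul_ne_bot_of_pos (by linarith) (hne_bot Y (hS.mapsTo Y hY)).ne')]
      exact le_top
    by_cases hYtop : rhoT μ S A Y = ⊤
    · rw [hYtop, EReal.coe_mul_top_of_pos (by linarith : (0 : ℝ) < 1 - t),
        EReal.add_top_of_ne_bot
          (EReal_mul_ne_bot_of_pos ht0' (hne_bot X (hS.mapsTo X hX)).ne')]
      exact le_top
    obtain ⟨x, hx⟩ : ∃ x : ℝ, rhoT μ S A X = (x : EReal) :=
      ⟨_, (EReal.coe_toReal hXtop (hne_bot X (hS.mapsTo X hX)).ne').symm⟩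
    obtain ⟨yv, hyv⟩ : ∃ yv : ℝ, rhoT μ S A Y = (yv : EReal) :=
      ⟨_, (EReal.coe_toReal hYtop (hne_bot Y (hS.mapsTo Y hY)).ne').symm⟩
    rw [hx, hyv, ← EReal.coe_mul, ← EReal.coe_mul, ← EReal.coe_add]
    have key : ∀ ε : ℝ, 0 < ε →
        rhoT μ S A (t • X + (1 - t) • Y) ≤ ((t * x + (1 - t) * yv + ε : ℝ) : EReal) := by
      intro ε hε
      obtain ⟨a, haX, hamem⟩ := hex X (x + ε)
        (by rw [hx]; exact_mod_cast lt_add_of_pos_right x hε)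
      obtain ⟨b, hbY, hbmem⟩ := hex Y (yv + ε)
        (by rw [hyv]; exact_mod_cast lt_add_of_pos_right yv hε)
      have hfeasZ := hfeas X hX Y hY t ht0 ht1 a b hamem hbmem
      have h1 : rhoT μ S A (t • X + (1 - t) • Y) ≤ ((t * a + (1 - t) * b : ℝ) : EReal) := by
        rw [rhoT]
        exact iInf₂_le (t * a + (1 - t) * b) hfeasZ
      refine h1.trans ?_
      exact_mod_cast (by nlinarith : t * a + (1 - t) * b ≤ t * x + (1 - t) * yv + ε)
    by_contra hcon
    push_neg at hcon
    obtain ⟨z, hz1, hz2⟩ := EReal.exists_between_coe_real hcon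
    have hkey := key (z - (t * x + (1 - t) * yv))
      (by
        have : (t * x + (1 - t) * yv : ℝ) < z := by exact_mod_cast hz1
        linarith)
    rw [show t * x + (1 - t) * yv + (z - (t * x + (1 - t) * yv)) = z from by ring] at hkey
    exact absurd (lt_of_lt_of_le hz2 hkey) (lt_irrefl _)
  · -- lower semicontinuity
    letI : TopologicalSpace ↥(prodSet Li) :=
      wtop (prodSet Li) (prodSet fun i => kdual (Li i))
    rw [lowerSemicontinuous_iff_isOpen_preimage]
    intro y
    induction y using EReal.rec with
    | bot =>
      have hset : (fun X : ↥(prodSet Li) => rhoT μ S A (X : Fin d → (Ω →ₘ[μ] ℝ))) ⁻¹'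
          (Ioi ⊥) = Set.univ := by
        ext X
        simp only [Set.mem_preimage, Set.mem_Ioi, Set.mem_univ, iff_true]
        exact hne_bot _ (hS.mapsTo _ X.2)
      rw [hset]
      exact isOpen_univ
    | coe y =>
      have hcl : IsClosed {X : ↥(prodSet Li) |
          S (X : Fin d → (Ω →ₘ[μ] ℝ)) + AEEqFun.const Ω y ∈ A} := by
        have hEq : {X : ↥(prodSet Li) |
            S (X : Fin d → (Ω →ₘ[μ] ℝ)) + AEEqFun.const Ω y ∈ A} =
            ⋂ (ψ' : Ω →ₘ[μ] ℝ) (_ : ψ' ∈ kdual EE) (_ : (0 : Ω →ₘ[μ] ℝ) ≤ ψ') (cc : ℝ)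
              (_ : ∀ V ∈ A, cc ≤ ip V ψ'),
              {X : ↥(prodSet Li) |
                cc ≤ ip (S (X : Fin d → (Ω →ₘ[μ] ℝ)) + AEEqFun.const Ω y) ψ'} := by
          ext X
          simp only [Set.mem_setOf_eq, Set.mem_iInter]
          exact mem_A_iff hE hA.subset hA.zero_mem hA.convex hA.mono hA.closed
            (hE.add_mem _ (hS.mapsTo _ X.2) _ (hconstE y))
        rw [hEq]
        refine isClosed_iInter fun ψ' => isClosed_iInter fun hψ' =>
          isClosed_iInter fun hψ'0 => isClosed_iInter fun cc => isClosed_iInter fun hcc => ?_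
        have hip : ∀ X : ↥(prodSet Li),
            ip (S (X : Fin d → (Ω →ₘ[μ] ℝ)) + AEEqFun.const Ω y) ψ'
              = (∫ ω, S (X : Fin d → (Ω →ₘ[μ] ℝ)) ω * ψ' ω ∂μ) + y * ∫ ω, ψ' ω ∂μ := by
          intro X
          rw [ip_add' (hψ' _ (hS.mapsTo _ X.2)) (hψ' _ (hconstE y)), ip_const']
          rfl
        have hsetEq : {X : ↥(prodSet Li) |
            cc ≤ ip (S (X : Fin d → (Ω →ₘ[μ] ℝ)) + AEEqFun.const Ω y) ψ'} =
            {X : ↥(prodSet Li) | cc - y * ∫ ω, ψ' ω ∂μ ≤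
              (fun X : ↥(prodSet Li) =>
                ∫ ω, S (X : Fin d → (Ω →ₘ[μ] ℝ)) ω * ψ' ω ∂μ) X} := by
          ext X
          rw [Set.mem_setOf_eq, Set.mem_setOf_eq, hip X]
          constructor <;> intro h <;> [linarith; linarith]
        rw [hsetEq]
        exact usc_superlevel (hS.usc ψ' hψ' hψ'0) _
      have hset : (fun X : ↥(prodSet Li) => rhoT μ S A (X : Fin d → (Ω →ₘ[μ] ℝ))) ⁻¹'
          (Ioi (y : EReal)) = {X : ↥(prodSet Li) |
            S (X : Fin d → (Ω →ₘ[μ] ℝ)) + AEEqFun.const Ω y ∈ A}ᶜ := by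
        ext X
        simp only [Set.mem_preimage, Set.mem_Ioi, Set.mem_compl_iff, Set.mem_setOf_eq]
        rw [← hle_iff _ (hS.mapsTo _ X.2) y]
        exact not_le.symm
      rw [hset]
      exact hcl.isOpen_compl
    | top =>
      have hset : (fun X : ↥(prodSet Li) => rhoT μ S A (X : Fin d → (Ω →ₘ[μ] ℝ))) ⁻¹'
          (Ioi ⊤) = (∅ : Set ↥(prodSet Li)) := by
        ext X
        simp [not_top_lt]
      rw [hset]
      exact isOpen_empty
  · -- properness iff `ρ̃(0) > ⊥`
    exact iff_of_true hproper (hne_bot 0 (hS.mapsTo 0 h0mem))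
  · -- properness iff the acceptance set does not contain all nonpositive constants
    refine iff_of_true hproper ?_
    intro heq
    set m : ℝ := min 0 ((c₀ - 1) / (∫ ω, ψ ω ∂μ)) with hm
    have hm0 : m ≤ 0 := min_le_left _ _
    have hmC : (AEEqFun.const Ω m : Ω →ₘ[μ] ℝ) ∈
        {U : Ω →ₘ[μ] ℝ | ∃ c : ℝ, c ≤ 0 ∧ U = (AEEqFun.const Ω c : Ω →ₘ[μ] ℝ)} :=
      ⟨m, hm0, rfl⟩
    rw [← heq] at hmC
    have h1 := hbd _ hmC.1
    rw [ip_const'] at h1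
    have h2 : m ≤ (c₀ - 1) / (∫ ω, ψ ω ∂μ) := min_le_right _ _
    have h3 : m * (∫ ω, ψ ω ∂μ) ≤ (c₀ - 1) / (∫ ω, ψ ω ∂μ) * (∫ ω, ψ ω ∂μ) :=
      mul_le_mul_of_nonneg_right h2 hIψ.le
    rw [div_mul_cancel₀ _ (ne_of_gt hIψ)] at h3
    linarith

end SystemicRisk
end
end
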